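/- Let (s_n)_{n≥1} ⊆ (0,1) satisfy s_2 < 1 - s_1/(1 - s_1) and s_n ≤ s_{n-2}/2 - 2·s_{n-1} for all n ≥ 3, and define c_n := 1 - s_n for n odd and c_n := s_n for n even, with a_n := 1 - c_n. Then for every N ≥ 3 and every n with 1 ≤ n ≤ N-2, one has a_{2n+2}·c_{2n+1} < (a_{2N}·c_{2N-1})²·c_{2n+1}. -/
import Mathlib


theorem stmt18 (s c a : ℕ → ℝ)
    (hs : ∀ n, 1 ≤ n → s n ∈ Set.Ioo (0 : ℝ) 1)
    (h1 : s 2 < 1 - s 1 / (1 - s 1))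
    (h2 : ∀ n, 3 ≤ n → s n ≤ s (n - 2) / 2 - 2 * s (n - 1))
    (hcodd : ∀ n, 1 ≤ n → Odd n → c n = 1 - s n)
    (hceven : ∀ n, 1 ≤ n → Even n → c n = s n)
    (ha : ∀ n, a n = 1 - c n) :
    ∀ N n : ℕ, 3 ≤ N → 1 ≤ n → n ≤ N - 2 →
      a (2 * n + 2) * c (2 * n + 1) < (a (2 * N) * c (2 * N - 1)) ^ 2 * c (2 * n + 1) := by
  -- step lemma: for k ≥ 2, s k < s (k-1) / 4
  have step : ∀ k, 2 ≤ k → s k < s (k - 1) / 4 := by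
    intro k hk
    have h := h2 (k + 1) (by omega)
    have e1 : k + 1 - 2 = k - 1 := by omega
    have e2 : k + 1 - 1 = k := by omega
    rw [e1, e2] at h
    have hpos := (hs (k + 1) (by omega)).1
    linarith
  -- monotonicity: s (k + d) ≤ s k for k ≥ 1
  have mono : ∀ d k, 1 ≤ k → s (k + d) ≤ s k := by
    intro d
    induction d with
    | zero => intro k hk; simp
    | succ d ih =>
      intro k hk
      have h := step (k + d + 1) (by omega)
      have e : k + d + 1 - 1 = k + d := by omega
      rw [e] at h
      have h2' := ih k hk
      have hpos := (hs (k + d) (by omega)).1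
      have : s (k + (d + 1)) = s (k + d + 1) := by ring_nf
      linarith
  intro N n hN hn hnN
  -- positivity facts
  have hs2n1 := hs (2 * n + 1) (by omega)
  have hs2n2 := hs (2 * n + 2) (by omega)
  have hs2N := hs (2 * N) (by omega)
  have hs2N1 := hs (2 * N - 1) (by omega)
  -- decay facts
  have d1 : s (2 * N - 1) ≤ s (2 * n + 3) := by
    have h := mono (2 * N - 1 - (2 * n + 3)) (2 * n + 3) (by omega)
    have e : 2 * n + 3 + (2 * N - 1 - (2 * n + 3)) = 2 * N - 1 := by omega
    rw [e] at h; exact h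
  have d2 : s (2 * N) ≤ s (2 * n + 4) := by
    have h := mono (2 * N - (2 * n + 4)) (2 * n + 4) (by omega)
    have e : 2 * n + 4 + (2 * N - (2 * n + 4)) = 2 * N := by omega
    rw [e] at h; exact h
  have st1 : s (2 * n + 3) < s (2 * n + 2) / 4 := by
    have h := step (2 * n + 3) (by omega)
    have e : 2 * n + 3 - 1 = 2 * n + 2 := by omega
    rw [e] at h; exact h
  have st2 : s (2 * n + 4) < s (2 * n + 3) / 4 := by
    have h := step (2 * n + 4) (by omega)
    have e : 2 * n + 4 - 1 = 2 * n + 3 := by omega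
    rw [e] at h; exact h
  -- rewrite c's and a's
  have hc1 : c (2 * n + 1) = 1 - s (2 * n + 1) :=
    hcodd _ (by omega) ⟨n, by ring⟩
  have hc2 : c (2 * n + 2) = s (2 * n + 2) :=
    hceven _ (by omega) ⟨n + 1, by ring⟩
  have hc3 : c (2 * N) = s (2 * N) :=
    hceven _ (by omega) ⟨N, by ring⟩
  have hc4 : c (2 * N - 1) = 1 - s (2 * N - 1) := by
    refine hcodd _ (by omega) ⟨N - 1, by omega⟩
  have ha1 : a (2 * n + 2) = 1 - s (2 * n + 2) := by rw [ha, hc2]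
  have ha2 : a (2 * N) = 1 - s (2 * N) := by rw [ha, hc3]
  rw [ha1, ha2, hc1, hc4]
  have hcpos : (0 : ℝ) < 1 - s (2 * n + 1) := by linarith [hs2n1.2]
  apply mul_lt_mul_of_pos_right _ hcpos
  set x := s (2 * N)
  set y := s (2 * N - 1)
  set t := s (2 * n + 2)
  have hxy : x + y < 5 / 16 * t := by
    have : s (2 * n + 3) < t / 4 := st1
    nlinarith [hs2n2.1]
  nlinarith [mul_pos hs2N.1 hs2N1.1, sq_nonneg (x + y), hs2n2.2, hs2n2.1,
    hs2N.1, hs2N1.1, mul_nonneg (mul_nonneg hs2N.1.le hs2N1.1.le) (le_of_lt hs2N1.1)]
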